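/- Let γ̄ > 0, θ > 0 and θ' > 0, and let w be the real number with w ≤ -1 satisfying w·e^w = -e^{-1-θ/γ̄}. Then the strict inequality (1 + 2θ'/γ̄)·e^{-2θ'/γ̄} > e^{-θ/γ̄} holds if and only if θ' < -(γ̄/2)·(w + 1). Equivalently, the cooperative outage probability P_c = 1 - (1 + 2θ'/γ̄)·e^{-2θ'/γ̄} is strictly smaller than the non-cooperative outage probability P_nc = 1 - e^{-θ/γ̄} if and only if θ' < -(γ̄/2)·(W_{-1}(-e^{-1-θ/γ̄}) + 1). -/

import Mathlib

lemma coop_aux_anti : StrictAntiOn (fun t : ℝ => (1 + t) * Real.exp (-t)) (Set.Ici 0) := by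
  apply strictAntiOn_of_deriv_neg (convex_Ici 0)
  · fun_prop
  · intro x hx
    rw [interior_Ici] at hx
    have h : HasDerivAt (fun t : ℝ => (1 + t) * Real.exp (-t)) (-x * Real.exp (-x)) x := by
      have h1 : HasDerivAt (fun t : ℝ => 1 + t) 1 x := by
        simpa using (hasDerivAt_id x).const_add 1
      have h2 : HasDerivAt (fun t : ℝ => Real.exp (-t)) (-Real.exp (-x)) x := by
        simpa using ((hasDerivAt_id x).neg.exp)
      have : HasDerivAt (fun t : ℝ => (1 + t) * Real.exp (-t))
          (1 * Real.exp (-x) + (1 + x) * -Real.exp (-x)) x := h1.mul h2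
      convert this using 1
      ring
    rw [h.deriv]
    have := Real.exp_pos (-x)
    nlinarith [Set.mem_Ioi.mp hx]

theorem cooperation_beneficial_iff (γ θ θ' w : ℝ) (hγ : 0 < γ) (hθ : 0 < θ)
    (hθ' : 0 < θ') (hw : w ≤ -1)
    (hWw : w * Real.exp w = -Real.exp (-1 - θ / γ)) :
    ((1 + 2 * θ' / γ) * Real.exp (-(2 * θ' / γ)) > Real.exp (-(θ / γ)) ↔
      θ' < -(γ / 2) * (w + 1)) ∧
    (1 - (1 + 2 * θ' / γ) * Real.exp (-(2 * θ' / γ)) < 1 - Real.exp (-(θ / γ)) ↔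
      θ' < -(γ / 2) * (w + 1)) := by
  set x := 2 * θ' / γ with hxdef
  set c := -(w + 1) with hcdef
  have hx0 : 0 < x := by positivity
  have hc0 : 0 ≤ c := by simp [hcdef]; linarith
  -- f c = exp (-(θ/γ))
  have hfc : (1 + c) * Real.exp (-c) = Real.exp (-(θ / γ)) := by
    have : (1 + c) * Real.exp (-c) = -w * (Real.exp w * Real.exp 1) := by
      rw [hcdef]
      rw [show -(-(w+1)) = w + 1 by ring, Real.exp_add]
      ring
    rw [this, ← mul_assoc, show -w * Real.exp w = Real.exp (-1 - θ/γ) by linarith [hWw],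
      ← Real.exp_add]
    ring_nf
  have hiff : (1 + x) * Real.exp (-x) > Real.exp (-(θ / γ)) ↔ x < c := by
    rw [← hfc]
    exact coop_aux_anti.lt_iff_gt hc0 (le_of_lt hx0)
  have hiff2 : x < c ↔ θ' < -(γ / 2) * (w + 1) := by
    rw [hxdef, hcdef, div_lt_iff₀ hγ]
    constructor <;> intro h <;> nlinarith
  constructor
  · exact hiff.trans hiff2
  · rw [sub_lt_sub_iff_left]
    exact hiff.trans hiff2
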